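/- Let μ > 0, t > 0, p ∈ (0,1). On a probability space let θ be a random variable taking values 1 and -1 with P(θ = 1) = p, and let Z be a centered Gaussian random variable with variance t independent of θ. Set X = μθt + Z. Then, almost surely, the conditional expectation of θ given the σ-algebra generated by X equals 1 - 2(1-p)/(p·e^{2μX} + 1 - p). -/

import Mathlib

open MeasureTheory ProbabilityTheory Real

lemma gauss_integral_eq (m : ℝ) {v : NNReal} (hv : v ≠ 0) (h : ℝ → ℝ) :
    ∫ x, h x ∂(gaussianReal m v) = ∫ x, gaussianPDFReal m v x * h x := by
  rw [gaussianReal_of_var_ne_zero m hv, gaussianPDF_def]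
  simp_rw [ENNReal.ofReal]
  rw [integral_withDensity_eq_integral_smul ((measurable_gaussianPDFReal m v).real_toNNReal)]
  refine integral_congr_ae (Filter.Eventually.of_forall fun x => ?_)
  simp [NNReal.smul_def, Real.coe_toNNReal _ (gaussianPDFReal_nonneg m v x)]

lemma pdf_shift (μ t : ℝ) (ht : 0 < t) (x : ℝ) :
    gaussianPDFReal (μ * t) t.toNNReal x
      = Real.exp (2 * μ * x) * gaussianPDFReal (-(μ * t)) t.toNNReal x := by
  unfold gaussianPDFReal
  rw [Real.coe_toNNReal t ht.le]
  rw [mul_left_comm, ← Real.exp_add]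
  congr 1
  field_simp
  ring

/-- Let `μ > 0`, `t > 0`, `p ∈ (0,1)`. On a probability space let `θ`
be a random variable taking values `1` and `-1` with `P(θ = 1) = p`, and let `Z` be a
centered Gaussian random variable with variance `t` independent of `θ`. Set
`X = μθt + Z`. Then, almost surely, the conditional expectation of `θ` given the
σ-algebra generated by `X` equals `1 - 2(1-p)/(p·e^{2μX} + 1 - p)`. -/
theorem condexp_drift (μ p t : ℝ) (hμ : 0 < μ) (hp : p ∈ Set.Ioo (0 : ℝ) 1)
    (ht : 0 < t) {Ω : Type*} [MeasurableSpace Ω] (P : Measure Ω) [IsProbabilityMeasure P]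
    (θ Z : Ω → ℝ) (hθmeas : Measurable θ) (hZmeas : Measurable Z)
    (hθpm : ∀ ω, θ ω = 1 ∨ θ ω = -1) (hθp : P {ω | θ ω = 1} = ENNReal.ofReal p)
    (hZlaw : Measure.map Z P = gaussianReal 0 (Real.toNNReal t))
    (hindep : IndepFun θ Z P) (X : Ω → ℝ) (hX : ∀ ω, X ω = μ * θ ω * t + Z ω) :
    P[θ | MeasurableSpace.comap X (borel ℝ)]
      =ᵐ[P] fun ω => 1 - 2 * (1 - p) / (p * Real.exp (2 * μ * X ω) + 1 - p) := by
  have hv : t.toNNReal ≠ 0 := by simp [Real.toNNReal_eq_zero, not_le, ht]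
  set g : ℝ → ℝ := fun x => 1 - 2 * (1 - p) / (p * Real.exp (2 * μ * x) + 1 - p) with hg_def
  have hDpos : ∀ x : ℝ, 0 < p * Real.exp (2 * μ * x) + 1 - p := by
    intro x
    nlinarith [Real.exp_pos (2 * μ * x), hp.1, hp.2]
  have hgmeas : Measurable g := by
    refine measurable_const.sub (Measurable.div measurable_const ?_)
    exact ((measurable_const.mul ((measurable_id.const_mul _).exp)).add_const 1).sub_const p
  have hgbdd : ∀ x, |g x| ≤ 1 := by
    intro x
    have hD := hDpos x
    have h0 : 0 ≤ 2 * (1 - p) / (p * Real.exp (2 * μ * x) + 1 - p) :=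
      div_nonneg (by linarith [hp.2]) hD.le
    have h2 : 2 * (1 - p) / (p * Real.exp (2 * μ * x) + 1 - p) ≤ 2 := by
      rw [div_le_iff₀ hD]
      nlinarith [Real.exp_pos (2 * μ * x), hp.1]
    rw [abs_le]
    constructor <;> simp only [hg_def] <;> linarith
  have hXeq : X = fun ω => μ * θ ω * t + Z ω := funext hX
  have hXmeas : Measurable X := by
    rw [hXeq]; exact ((hθmeas.const_mul μ).mul_const t).add hZmeas
  have hm : MeasurableSpace.comap X (borel ℝ) ≤ ‹MeasurableSpace Ω› := hXmeas.comap_le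
  haveI : SigmaFinite (P.trim hm) := by infer_instance
  have hθint : Integrable θ P := by
    refine (integrable_const (1 : ℝ)).mono' hθmeas.aestronglyMeasurable
      (Filter.Eventually.of_forall fun ω => ?_)
    rcases hθpm ω with h | h <;> simp [h]
  have hgXmeas : Measurable fun ω => g (X ω) := hgmeas.comp hXmeas
  have hgXint : Integrable (fun ω => g (X ω)) P :=
    (integrable_const (1 : ℝ)).mono' hgXmeas.aestronglyMeasurable
      (Filter.Eventually.of_forall fun ω => by simpa using hgbdd (X ω))
  have hXm : Measurable[MeasurableSpace.comap X (borel ℝ)] X :=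
    Measurable.of_comap_le le_rfl
  have hsm : StronglyMeasurable[MeasurableSpace.comap X (borel ℝ)] fun ω => g (X ω) :=
    (hgmeas.comp hXm).stronglyMeasurable
  have key : ∀ s : Set Ω, MeasurableSet[MeasurableSpace.comap X (borel ℝ)] s → P s < ⊤ →
      ∫ ω in s, g (X ω) ∂P = ∫ ω in s, θ ω ∂P := by
    intro s hs _
    obtain ⟨B, hB', rfl⟩ := hs
    have hB : MeasurableSet B := hB'
    -- bounded-integrability helper
    have hbd : ∀ f : Ω → ℝ, Measurable f → (∀ ω, |f ω| ≤ 1) → Integrable f P := by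
      intro f hf hb
      exact (integrable_const (1 : ℝ)).mono' hf.aestronglyMeasurable
        (Filter.Eventually.of_forall fun ω => by simpa using hb ω)
    set F₁ : ℝ → ℝ := Set.indicator {1} (fun _ => (1:ℝ)) with hF₁
    set F₂ : ℝ → ℝ := Set.indicator {-1} (fun _ => (1:ℝ)) with hF₂
    set u : ℝ → ℝ := fun z => Set.indicator B (fun _ => (1:ℝ)) (μ * t + z) with hu
    set v : ℝ → ℝ := fun z => Set.indicator B (fun _ => (1:ℝ)) (-(μ * t) + z) with hv'
    set Gu : ℝ → ℝ := fun z => Set.indicator B g (μ * t + z) with hGu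
    set Gv : ℝ → ℝ := fun z => Set.indicator B g (-(μ * t) + z) with hGv
    have hF₁meas : Measurable F₁ := measurable_const.indicator (measurableSet_singleton 1)
    have hF₂meas : Measurable F₂ := measurable_const.indicator (measurableSet_singleton (-1))
    have humeas : Measurable u :=
      (measurable_const.indicator hB).comp (measurable_const.add measurable_id)
    have hvmeas : Measurable v :=
      (measurable_const.indicator hB).comp (measurable_const.add measurable_id)
    have hGumeas : Measurable Gu :=
      (hgmeas.indicator hB).comp (measurable_const.add measurable_id)
    have hGvmeas : Measurable Gv :=
      (hgmeas.indicator hB).comp (measurable_const.add measurable_id)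
    have hF₁bdd : ∀ s : ℝ, |F₁ s| ≤ 1 := by
      intro s; rw [hF₁, Set.indicator_apply]; split_ifs <;> simp
    have hF₂bdd : ∀ s : ℝ, |F₂ s| ≤ 1 := by
      intro s; rw [hF₂, Set.indicator_apply]; split_ifs <;> simp
    have hubdd : ∀ z : ℝ, |u z| ≤ 1 := by
      intro z; by_cases hx : μ * t + z ∈ B <;> simp [hu, Set.indicator_apply, hx]
    have hvbdd : ∀ z : ℝ, |v z| ≤ 1 := by
      intro z; by_cases hx : -(μ * t) + z ∈ B <;> simp [hv', Set.indicator_apply, hx]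
    have hGubdd : ∀ z : ℝ, |Gu z| ≤ 1 := by
      intro z; by_cases hx : μ * t + z ∈ B <;> simp [hGu, Set.indicator_apply, hx]
      exact hgbdd _
    have hGvbdd : ∀ z : ℝ, |Gv z| ≤ 1 := by
      intro z; by_cases hx : -(μ * t) + z ∈ B <;> simp [hGv, Set.indicator_apply, hx]
      exact hgbdd _
    -- pointwise decompositions
    have hdec1 : ∀ ω, Set.indicator (X ⁻¹' B) θ ω = F₁ (θ ω) * u (Z ω) - F₂ (θ ω) * v (Z ω) := by
      intro ω
      rcases hθpm ω with h | h
      · have hXω : X ω = μ * t + Z ω := by rw [hX ω, h]; ring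
        by_cases hBx : μ * t + Z ω ∈ B <;>
          norm_num [Set.indicator_apply, Set.mem_preimage, hXω, h, hBx, hF₁, hF₂, hu, hv']
      · have hXω : X ω = -(μ * t) + Z ω := by rw [hX ω, h]; ring
        by_cases hBx : -(μ * t) + Z ω ∈ B <;>
          norm_num [Set.indicator_apply, Set.mem_preimage, hXω, h, hBx, hF₁, hF₂, hu, hv']
    have hdec2 : ∀ ω, Set.indicator (X ⁻¹' B) (fun ω => g (X ω)) ω
        = F₁ (θ ω) * Gu (Z ω) + F₂ (θ ω) * Gv (Z ω) := by
      intro ω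
      rcases hθpm ω with h | h
      · have hXω : X ω = μ * t + Z ω := by rw [hX ω, h]; ring
        by_cases hBx : μ * t + Z ω ∈ B <;>
          norm_num [Set.indicator_apply, Set.mem_preimage, hXω, h, hBx, hF₁, hF₂, hGu, hGv]
      · have hXω : X ω = -(μ * t) + Z ω := by rw [hX ω, h]; ring
        by_cases hBx : -(μ * t) + Z ω ∈ B <;>
          norm_num [Set.indicator_apply, Set.mem_preimage, hXω, h, hBx, hF₁, hF₂, hGu, hGv]
    -- independence of composed functions
    have hind1 : IndepFun (fun ω => F₁ (θ ω)) (fun ω => u (Z ω)) P :=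
      hindep.comp hF₁meas humeas
    have hind2 : IndepFun (fun ω => F₂ (θ ω)) (fun ω => v (Z ω)) P :=
      hindep.comp hF₂meas hvmeas
    have hind3 : IndepFun (fun ω => F₁ (θ ω)) (fun ω => Gu (Z ω)) P :=
      hindep.comp hF₁meas hGumeas
    have hind4 : IndepFun (fun ω => F₂ (θ ω)) (fun ω => Gv (Z ω)) P :=
      hindep.comp hF₂meas hGvmeas
    -- marginal integrals for θ
    have hA : MeasurableSet (θ ⁻¹' {1}) := hθmeas (measurableSet_singleton 1)
    have hsetθ : {ω | θ ω = 1} = θ ⁻¹' {1} := by ext ω; simp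
    have hIF₁ : ∫ ω, F₁ (θ ω) ∂P = p := by
      have heq : (fun ω => F₁ (θ ω)) = Set.indicator (θ ⁻¹' {1}) (fun _ => (1:ℝ)) := by
        ext ω; by_cases h : θ ω = 1 <;> simp [hF₁, Set.indicator_apply, h]
      rw [heq, integral_indicator_const _ hA, ← hsetθ, measureReal_def, hθp]
      simp [ENNReal.toReal_ofReal hp.1.le]
    have hcompl : θ ⁻¹' {-1} = (θ ⁻¹' {1})ᶜ := by
      ext ω; rcases hθpm ω with h | h <;> norm_num [h]
    have hIF₂ : ∫ ω, F₂ (θ ω) ∂P = 1 - p := by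
      have heq : (fun ω => F₂ (θ ω)) = Set.indicator (θ ⁻¹' {-1}) (fun _ => (1:ℝ)) := by
        ext ω; by_cases h : θ ω = -1 <;> simp [hF₂, Set.indicator_apply, h]
      rw [heq, integral_indicator_const _ (hθmeas (measurableSet_singleton (-1))), hcompl, measureReal_def,
        measure_compl hA (measure_ne_top _ _), ← hsetθ, hθp]
      rw [measure_univ, ← ENNReal.ofReal_one, ← ENNReal.ofReal_sub _ hp.1.le]
      simp [ENNReal.toReal_ofReal (by linarith [hp.2] : (0:ℝ) ≤ 1 - p)]
    -- marginal integrals for Z via gaussian laws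
    have lawgen : ∀ c : ℝ, Measure.map (fun ω => c + Z ω) P = gaussianReal c t.toNNReal := by
      intro c
      have hcomp : (fun ω => c + Z ω) = (fun x => c + x) ∘ Z := rfl
      rw [hcomp, ← Measure.map_map (by fun_prop : Measurable fun x : ℝ => c + x) hZmeas, hZlaw,
        gaussianReal_map_const_add, zero_add]
    have lawP : Measure.map (fun ω => μ * t + Z ω) P = gaussianReal (μ * t) t.toNNReal :=
      lawgen (μ * t)
    have lawM : Measure.map (fun ω => -(μ * t) + Z ω) P
        = gaussianReal (-(μ * t)) t.toNNReal := lawgen (-(μ * t))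
    have hmapint : ∀ (c : ℝ) (h : ℝ → ℝ), Measurable h →
        ∫ ω, h (c + Z ω) ∂P = ∫ x, h x ∂(Measure.map (fun ω => c + Z ω) P) := by
      intro c h hh
      rw [integral_map (φ := fun ω => c + Z ω) (measurable_const.add hZmeas).aemeasurable hh.aestronglyMeasurable]
    have indic_mul : ∀ f : ℝ → ℝ,
        (fun x => gaussianPDFReal (μ * t) t.toNNReal x * Set.indicator B f x)
          = Set.indicator B (fun x => gaussianPDFReal (μ * t) t.toNNReal x * f x) := by
      intro f; ext x; by_cases hx : x ∈ B <;> simp [hx]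
    have indic_mul' : ∀ f : ℝ → ℝ,
        (fun x => gaussianPDFReal (-(μ * t)) t.toNNReal x * Set.indicator B f x)
          = Set.indicator B (fun x => gaussianPDFReal (-(μ * t)) t.toNNReal x * f x) := by
      intro f; ext x; by_cases hx : x ∈ B <;> simp [hx]
    have hIu : ∫ ω, u (Z ω) ∂P = ∫ x in B, gaussianPDFReal (μ * t) t.toNNReal x := by
      rw [hu]
      rw [hmapint (μ * t) _ (measurable_const.indicator hB), lawP, gauss_integral_eq _ hv,
        indic_mul, integral_indicator hB]
      simp
    have hIv : ∫ ω, v (Z ω) ∂P = ∫ x in B, gaussianPDFReal (-(μ * t)) t.toNNReal x := by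
      rw [hv']
      rw [hmapint (-(μ * t)) _ (measurable_const.indicator hB), lawM, gauss_integral_eq _ hv,
        indic_mul', integral_indicator hB]
      simp
    have hIGu : ∫ ω, Gu (Z ω) ∂P
        = ∫ x in B, gaussianPDFReal (μ * t) t.toNNReal x * g x := by
      rw [hGu]
      rw [hmapint (μ * t) _ (hgmeas.indicator hB), lawP, gauss_integral_eq _ hv,
        indic_mul, integral_indicator hB]
    have hIGv : ∫ ω, Gv (Z ω) ∂P
        = ∫ x in B, gaussianPDFReal (-(μ * t)) t.toNNReal x * g x := by
      rw [hGv]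
      rw [hmapint (-(μ * t)) _ (hgmeas.indicator hB), lawM, gauss_integral_eq _ hv,
        indic_mul', integral_indicator hB]
    -- compute both sides
    have hmulbdd : ∀ (f₁ : ℝ → ℝ) (f₂ : ℝ → ℝ), Measurable f₁ → Measurable f₂ →
        (∀ s, |f₁ s| ≤ 1) → (∀ s, |f₂ s| ≤ 1) →
        Integrable (fun ω => f₁ (θ ω) * f₂ (Z ω)) P := by
      intro f₁ f₂ h₁ h₂ hb₁ hb₂
      refine hbd _ ((h₁.comp hθmeas).mul (h₂.comp hZmeas)) fun ω => ?_
      rw [abs_mul]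
      calc |f₁ (θ ω)| * |f₂ (Z ω)| ≤ 1 * 1 :=
        mul_le_mul (hb₁ _) (hb₂ _) (abs_nonneg _) zero_le_one
      _ = 1 := one_mul 1
    have lhs_eq : ∫ ω in X ⁻¹' B, g (X ω) ∂P
        = p * (∫ x in B, gaussianPDFReal (μ * t) t.toNNReal x * g x)
          + (1 - p) * (∫ x in B, gaussianPDFReal (-(μ * t)) t.toNNReal x * g x) := by
      rw [← integral_indicator (hXmeas hB)]
      rw [integral_congr_ae (Filter.Eventually.of_forall hdec2)]
      rw [integral_add (hmulbdd _ _ hF₁meas hGumeas hF₁bdd hGubdd)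
        (hmulbdd _ _ hF₂meas hGvmeas hF₂bdd hGvbdd)]
      rw [hind3.integral_fun_mul_eq_mul_integral (hF₁meas.comp hθmeas).aestronglyMeasurable
        (hGumeas.comp hZmeas).aestronglyMeasurable,
        hind4.integral_fun_mul_eq_mul_integral (hF₂meas.comp hθmeas).aestronglyMeasurable
        (hGvmeas.comp hZmeas).aestronglyMeasurable,
        hIF₁, hIF₂, hIGu, hIGv]
    have rhs_eq : ∫ ω in X ⁻¹' B, θ ω ∂P
        = p * (∫ x in B, gaussianPDFReal (μ * t) t.toNNReal x)
          - (1 - p) * (∫ x in B, gaussianPDFReal (-(μ * t)) t.toNNReal x) := by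
      rw [← integral_indicator (hXmeas hB)]
      rw [integral_congr_ae (Filter.Eventually.of_forall hdec1)]
      rw [integral_sub (hmulbdd _ _ hF₁meas humeas hF₁bdd hubdd)
        (hmulbdd _ _ hF₂meas hvmeas hF₂bdd hvbdd)]
      rw [hind1.integral_fun_mul_eq_mul_integral (hF₁meas.comp hθmeas).aestronglyMeasurable
        (humeas.comp hZmeas).aestronglyMeasurable,
        hind2.integral_fun_mul_eq_mul_integral (hF₂meas.comp hθmeas).aestronglyMeasurable
        (hvmeas.comp hZmeas).aestronglyMeasurable,
        hIF₁, hIF₂, hIu, hIv]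
    rw [lhs_eq, rhs_eq]
    -- combine into a single integral over B and use the pointwise density identity
    have hintP : IntegrableOn (gaussianPDFReal (μ * t) t.toNNReal) B volume :=
      (integrable_gaussianPDFReal _ _).integrableOn
    have hintM : IntegrableOn (gaussianPDFReal (-(μ * t)) t.toNNReal) B volume :=
      (integrable_gaussianPDFReal _ _).integrableOn
    have hintgP : IntegrableOn (fun x => gaussianPDFReal (μ * t) t.toNNReal x * g x) B volume := by
      have h1 := Integrable.bdd_mul (c := 1) hintP hgmeas.aestronglyMeasurable.restrict
        (Filter.Eventually.of_forall fun x => by simpa using hgbdd x)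
      exact h1.congr (Filter.Eventually.of_forall fun x => mul_comm _ _)
    have hintgM : IntegrableOn
        (fun x => gaussianPDFReal (-(μ * t)) t.toNNReal x * g x) B volume := by
      have h1 := Integrable.bdd_mul (c := 1) hintM hgmeas.aestronglyMeasurable.restrict
        (Filter.Eventually.of_forall fun x => by simpa using hgbdd x)
      exact h1.congr (Filter.Eventually.of_forall fun x => mul_comm _ _)
    simp_rw [← integral_const_mul]
    rw [← integral_add (hintgP.const_mul p) (hintgM.const_mul (1 - p)),
      ← integral_sub (hintP.const_mul p) (hintM.const_mul (1 - p))]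
    refine integral_congr_ae (Filter.Eventually.of_forall fun x => ?_)
    have hD := (hDpos x).ne'
    simp only [hg_def, pdf_shift μ t ht x]
    field_simp
    ring
  exact (ae_eq_condExp_of_forall_setIntegral_eq hm hθint
    (fun s _ _ => hgXint.integrableOn) key ⟨_, hsm, Filter.EventuallyEq.rfl⟩).symm
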